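/- Let Af : ℕ → ℝ[X] satisfy Af(n) = (3x³+3x²+x)Af(n−1) − (2x⁶+6x⁵−x⁴+3x³)Af(n−2) + (x⁷+3x⁶)Af(n−3) with Af(0)=1, Af(1)=2x³+3x²+x, Af(2)=4x⁶+9x⁵+15x⁴+3x³+x². Then for every n ≥ 1, the degree of Af(n) is 3n, its leading coefficient is 2^n, and the smallest exponent with nonzero coefficient is n. -/

import Mathlib

open Polynomial

private lemma lo_mul (p q : Polynomial ℝ) {a b : ℕ} (hp : ∀ m < a, p.coeff m = 0)
    (hq : ∀ m < b, q.coeff m = 0) : ∀ m < a + b, (p * q).coeff m = 0 := by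
  intro m hm
  rw [coeff_mul]
  apply Finset.sum_eq_zero
  rintro ⟨i, j⟩ hij
  rw [Finset.HasAntidiagonal.mem_antidiagonal] at hij
  by_cases hi : i < a
  · simp [hp i hi]
  · have hj : j < b := by omega
    simp [hq j hj]

private lemma coeff_mul_at (p q : Polynomial ℝ) {a b : ℕ} (hp : ∀ m < a, p.coeff m = 0)
    (hq : ∀ m < b, q.coeff m = 0) : (p * q).coeff (a + b) = p.coeff a * q.coeff b := by
  rw [coeff_mul, Finset.sum_eq_single (a, b)]
  · rintro ⟨i, j⟩ hij hne
    rw [Finset.HasAntidiagonal.mem_antidiagonal] at hij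
    by_cases hi : i < a
    · simp [hp i hi]
    · have hj : j < b := by
        rcases Nat.lt_or_ge a i with h | h
        · omega
        · exfalso; apply hne; have : i = a := by omega
          subst this; simp_all
      simp [hq j hj]
  · intro h; simp [Finset.mem_antidiagonal] at h

theorem stmt_12 (Af : ℕ → Polynomial ℝ)
    (h0 : Af 0 = 1)
    (h1 : Af 1 = 2 * X ^ 3 + 3 * X ^ 2 + X)
    (h2 : Af 2 = 4 * X ^ 6 + 9 * X ^ 5 + 15 * X ^ 4 + 3 * X ^ 3 + X ^ 2)
    (hrec : ∀ n, 3 ≤ n → Af n = (3 * X ^ 3 + 3 * X ^ 2 + X) * Af (n - 1)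
      - (2 * X ^ 6 + 6 * X ^ 5 - X ^ 4 + 3 * X ^ 3) * Af (n - 2)
      + (X ^ 7 + 3 * X ^ 6) * Af (n - 3)) :
    ∀ n, 1 ≤ n →
      (Af n).natDegree = 3 * n ∧ (Af n).leadingCoeff = 2 ^ n ∧
      (Af n).coeff n ≠ 0 ∧ ∀ m < n, (Af n).coeff m = 0 := by
  set A : Polynomial ℝ := 3 * X ^ 3 + 3 * X ^ 2 + X with hAdef
  set B : Polynomial ℝ := 2 * X ^ 6 + 6 * X ^ 5 - X ^ 4 + 3 * X ^ 3 with hBdef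
  set Cp : Polynomial ℝ := X ^ 7 + 3 * X ^ 6 with hCdef
  have hAdeg : A.natDegree = 3 := by rw [hAdef]; compute_degree!
  have hA3 : A.coeff 3 = 3 := by rw [hAdef]; simp [coeff_X_pow, coeff_X]
  have hA1 : A.coeff 1 = 1 := by rw [hAdef]; simp [coeff_X_pow, coeff_X]
  have hAlead : A.leadingCoeff = 3 := by rw [Polynomial.leadingCoeff, hAdeg, hA3]
  have hAlo : ∀ m < 1, A.coeff m = 0 := by
    intro m hm; interval_cases m; rw [hAdef]; simp [coeff_X_pow, coeff_X]
  have hBdeg : B.natDegree = 6 := by rw [hBdef]; compute_degree!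
  have hB6 : B.coeff 6 = 2 := by rw [hBdef]; simp [coeff_X_pow]
  have hBlead : B.leadingCoeff = 2 := by rw [Polynomial.leadingCoeff, hBdeg, hB6]
  have hBlo : ∀ m < 3, B.coeff m = 0 := by
    intro m hm; interval_cases m <;> (rw [hBdef]; simp [coeff_X_pow])
  have hCdeg : Cp.natDegree ≤ 7 := by rw [hCdef]; compute_degree
  have hClo : ∀ m < 6, Cp.coeff m = 0 := by
    intro m hm; interval_cases m <;> (rw [hCdef]; simp [coeff_X_pow])
  have key : ∀ n : ℕ, (Af n).natDegree = 3 * n ∧ (Af n).leadingCoeff = 2 ^ n ∧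
      (Af n).coeff n ≠ 0 ∧ ∀ m < n, (Af n).coeff m = 0 := by
    intro n
    induction n using Nat.strong_induction_on with
    | _ n IH =>
      rcases n with _ | n
      · refine ⟨by simp [h0], by simp [h0], by simp [h0], by intro m hm; omega⟩
      rcases n with _ | n
      · refine ⟨by rw [h1]; compute_degree!, ?_, ?_, ?_⟩
        · rw [Polynomial.leadingCoeff, h1]
          have : (Af 1).natDegree = 3 := by rw [h1]; compute_degree!
          rw [h1] at this; rw [this]; simp [coeff_X_pow, coeff_X]
        · rw [h1]; simp [coeff_X_pow, coeff_X]
        · intro m hm; interval_cases m; rw [h1]; simp [coeff_X_pow, coeff_X]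
      rcases n with _ | k
      · refine ⟨by rw [h2]; compute_degree!, ?_, ?_, ?_⟩
        · rw [Polynomial.leadingCoeff, h2]
          have : (Af 2).natDegree = 6 := by rw [h2]; compute_degree!
          rw [h2] at this; rw [this]; simp [coeff_X_pow]; norm_num
        · rw [h2]; simp [coeff_X_pow]
        · intro m hm; interval_cases m <;> (rw [h2]; simp [coeff_X_pow])
      -- inductive step : n = k + 3
      obtain ⟨d2, l2, c2, z2⟩ := IH (k + 2) (by omega)
      obtain ⟨d1, l1, c1, z1⟩ := IH (k + 1) (by omega)
      obtain ⟨d0, l0, c0, z0⟩ := IH k (by omega)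
      have e : Af (k + 3) = A * Af (k + 2) - B * Af (k + 1) + Cp * Af k := by
        have := hrec (k + 3) (by omega)
        simpa [show k + 3 - 1 = k + 2 by omega, show k + 3 - 2 = k + 1 by omega,
          show k + 3 - 3 = k by omega] using this
      have ctop2 : (Af (k + 2)).coeff (3 * (k + 2)) = 2 ^ (k + 2) := by
        have := l2; rwa [Polynomial.leadingCoeff, d2] at this
      -- coefficient at top degree
      have t1 : (A * Af (k + 2)).coeff (3 * (k + 3)) = 3 * 2 ^ (k + 2) := by
        have h := Polynomial.coeff_mul_degree_add_degree A (Af (k + 2))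
        rw [hAdeg, d2, hAlead, l2] at h
        rw [show 3 * (k + 3) = 3 + 3 * (k + 2) by ring, h]
      have t2 : (B * Af (k + 1)).coeff (3 * (k + 3)) = 2 * 2 ^ (k + 1) := by
        have h := Polynomial.coeff_mul_degree_add_degree B (Af (k + 1))
        rw [hBdeg, d1, hBlead, l1] at h
        rw [show 3 * (k + 3) = 6 + 3 * (k + 1) by ring, h]
      have t3 : (Cp * Af k).coeff (3 * (k + 3)) = 0 := by
        apply coeff_eq_zero_of_natDegree_lt
        calc (Cp * Af k).natDegree ≤ Cp.natDegree + (Af k).natDegree :=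
              natDegree_mul_le
          _ ≤ 7 + 3 * k := by omega
          _ < 3 * (k + 3) := by omega
      have hc : (Af (k + 3)).coeff (3 * (k + 3)) = 2 ^ (k + 3) := by
        rw [e, coeff_add, coeff_sub, t1, t2, t3]
        ring
      have hdle : (Af (k + 3)).natDegree ≤ 3 * (k + 3) := by
        rw [e]
        refine le_trans (natDegree_add_le _ _) (max_le ?_ ?_)
        · refine le_trans (natDegree_sub_le _ _) (max_le ?_ ?_)
          · calc (A * Af (k + 2)).natDegree ≤ A.natDegree + (Af (k + 2)).natDegree :=
                  natDegree_mul_le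
              _ ≤ 3 * (k + 3) := by omega
          · calc (B * Af (k + 1)).natDegree ≤ B.natDegree + (Af (k + 1)).natDegree :=
                  natDegree_mul_le
              _ ≤ 3 * (k + 3) := by omega
        · calc (Cp * Af k).natDegree ≤ Cp.natDegree + (Af k).natDegree :=
              natDegree_mul_le
            _ ≤ 3 * (k + 3) := by omega
      have hdeg : (Af (k + 3)).natDegree = 3 * (k + 3) := by
        refine le_antisymm hdle (le_natDegree_of_ne_zero ?_)
        rw [hc]; positivity
      have hlead : (Af (k + 3)).leadingCoeff = 2 ^ (k + 3) := by
        rw [Polynomial.leadingCoeff, hdeg, hc]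
      refine ⟨hdeg, hlead, ?_, ?_⟩
      · -- coeff at k+3 is nonzero
        have t1' : (A * Af (k + 2)).coeff (k + 3) = (Af (k + 2)).coeff (k + 2) := by
          have h := coeff_mul_at A (Af (k + 2)) hAlo z2
          rw [hA1, one_mul] at h
          rw [show k + 3 = 1 + (k + 2) by omega, h]
        have t2' : (B * Af (k + 1)).coeff (k + 3) = 0 :=
          lo_mul B (Af (k + 1)) hBlo z1 (k + 3) (by omega)
        have t3' : (Cp * Af k).coeff (k + 3) = 0 :=
          lo_mul Cp (Af k) hClo z0 (k + 3) (by omega)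
        rw [e, coeff_add, coeff_sub, t1', t2', t3']
        simpa using c2
      · intro m hm
        have t1' : (A * Af (k + 2)).coeff m = 0 :=
          lo_mul A (Af (k + 2)) hAlo z2 m (by omega)
        have t2' : (B * Af (k + 1)).coeff m = 0 :=
          lo_mul B (Af (k + 1)) hBlo z1 m (by omega)
        have t3' : (Cp * Af k).coeff m = 0 :=
          lo_mul Cp (Af k) hClo z0 m (by omega)
        rw [e, coeff_add, coeff_sub, t1', t2', t3']
        ring
  exact fun n _ => key n
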